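/- With γ = 0, the unconditional variance of validator j's share satisfies Var(ω_{j,t}) = a_t·ω_{j,0}(1 − ω_{j,0}) for all t ≥ 1, where a_1 = z_1, a_{t+1} = a_t + z_{t+1}(1 − a_t), and z_{t+1} = E[(R_{t+1}/S_{t+1})²]. -/
import Mathlib


open MeasureTheory

/-- Unconditional variance of validator j's share (γ = 0):
Var(ω_{j,t}) = aₜ·ω_{j,0}(1 − ω_{j,0}) with a₁ = z₁, a_{t+1} = aₜ + z_{t+1}(1 − aₜ). -/
theorem stmt_11 {Ω : Type*} {m0 : MeasurableSpace Ω} (μ : Measure Ω) [IsProbabilityMeasure μ]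
    (ℱ : Filtration ℕ m0) (W : ℕ → Ω → ℝ) (R S : ℕ → Ω → ℝ) (ω0 : ℝ) (z a : ℕ → ℝ)
    (hmart : Martingale W ℱ μ)
    (hbdd : ∀ t ω, W t ω ∈ Set.Icc (0:ℝ) 1)
    (hinit : ∀ ω, W 0 ω = ω0)
    (hz : ∀ t : ℕ, z (t + 1) = ∫ ω, (R (t + 1) ω / S (t + 1) ω) ^ 2 ∂μ)
    -- conditional variance identity from the one-step lemma; with γ = 0 the
    -- conditional expectation of (R_{t+1}/S_{t+1})² is the constant z_{t+1}:
    (hcondvar : ∀ t : ℕ,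
      μ[fun ω => (W (t + 1) ω - W t ω) ^ 2 | ℱ t]
        =ᵐ[μ] fun ω => W t ω * (1 - W t ω) * z (t + 1))
    (hsq : ∀ t, Integrable (fun ω => (W t ω) ^ 2) μ)
    (ha1 : a 1 = z 1) (ha : ∀ t : ℕ, 1 ≤ t → a (t + 1) = a t + z (t + 1) * (1 - a t)) :
    ∀ t : ℕ, 1 ≤ t →
      (∫ ω, (W t ω) ^ 2 ∂μ) - (∫ ω, W t ω ∂μ) ^ 2 = a t * (ω0 * (1 - ω0)) := by
  -- measurability and boundedness helpers
  have hmeas : ∀ t, StronglyMeasurable (W t) :=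
    fun t => (hmart.stronglyAdapted t).mono (ℱ.le t)
  have hbdd_int : ∀ (f : Ω → ℝ) (C : ℝ), AEStronglyMeasurable f μ → (∀ ω, |f ω| ≤ C) →
      Integrable f μ := by
    intro f C hf h
    exact (integrable_const C).mono' hf (Filter.Eventually.of_forall fun ω => by
      simpa [Real.norm_eq_abs] using h ω)
  -- expectation is constant
  have hint : ∀ t, ∫ ω, W t ω ∂μ = ω0 := by
    intro t
    have h := hmart.2 0 t (Nat.zero_le t)
    calc ∫ ω, W t ω ∂μ = ∫ ω, (μ[W t | ℱ 0]) ω ∂μ := (integral_condExp (ℱ.le 0)).symm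
      _ = ∫ ω, W 0 ω ∂μ := integral_congr_ae h
      _ = ω0 := by simp [hinit]
  -- one-step recursion for second moments
  have step : ∀ t : ℕ, ∫ ω, (W (t + 1) ω) ^ 2 ∂μ
      = ∫ ω, (W t ω) ^ 2 ∂μ + z (t + 1) * (ω0 - ∫ ω, (W t ω) ^ 2 ∂μ) := by
    intro t
    set d : Ω → ℝ := fun ω => W (t + 1) ω - W t ω with hd_def
    have hd_int : Integrable d μ := (hmart.integrable (t + 1)).sub (hmart.integrable t)
    have hd_bd : ∀ ω, |d ω| ≤ 1 := by
      intro ω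
      have h1 := hbdd (t + 1) ω; have h2 := hbdd t ω
      simp only [hd_def]
      rw [abs_le]; constructor <;> [linarith [h1.1, h2.2]; linarith [h1.2, h2.1]]
    have hd_meas : AEStronglyMeasurable d μ :=
      ((hmeas (t + 1)).sub (hmeas t)).aestronglyMeasurable
    -- orthogonality: ∫ W t * d = 0
    have hcd : μ[d | ℱ t] =ᵐ[μ] 0 := by
      have h1 := hmart.2 t (t + 1) (Nat.le_succ t)
      have h2 : μ[W t | ℱ t] = W t :=
        condExp_of_stronglyMeasurable (ℱ.le t) (hmart.stronglyAdapted t) (hmart.integrable t)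
      have h3 := condExp_sub (hmart.integrable (t + 1)) (hmart.integrable t) (m := ℱ t)
      filter_upwards [h1, h3] with ω e1 e3
      simp only [hd_def, Pi.zero_apply]
      have : (μ[fun ω => W (t + 1) ω - W t ω | ℱ t]) ω
          = (μ[W (t + 1) | ℱ t]) ω - (μ[W t | ℱ t]) ω := e3
      rw [this, e1, show (μ[W t | ℱ t]) ω = W t ω from congrFun h2 ω, sub_self]
    have hWd_int : Integrable (W t * d) μ := by
      refine hbdd_int _ 1 ((hmeas t).mul ((hmeas (t + 1)).sub (hmeas t))).aestronglyMeasurable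
        fun ω => ?_
      have h2 := hbdd t ω
      calc |W t ω * d ω| = |W t ω| * |d ω| := abs_mul _ _
        _ ≤ 1 * 1 := by
            refine mul_le_mul ?_ (hd_bd ω) (abs_nonneg _) zero_le_one
            rw [abs_le]; constructor <;> linarith [h2.1, h2.2]
        _ = 1 := one_mul 1
    have hWd_int' : Integrable (fun ω => W t ω * d ω) μ := hWd_int
    have horth : ∫ ω, W t ω * d ω ∂μ = 0 := by
      have h := condExp_mul_of_stronglyMeasurable_left (hmart.stronglyAdapted t) hWd_int hd_int
      have h2 : μ[W t * d | ℱ t] =ᵐ[μ] 0 := by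
        filter_upwards [h, hcd] with ω e1 e2
        simp only [Pi.mul_apply, Pi.zero_apply] at *
        rw [e1, e2, mul_zero]
      calc ∫ ω, W t ω * d ω ∂μ = ∫ ω, (W t * d) ω ∂μ := rfl
        _ = ∫ ω, (μ[W t * d | ℱ t]) ω ∂μ := (integral_condExp (ℱ.le t)).symm
        _ = ∫ ω, (0 : Ω → ℝ) ω ∂μ := integral_congr_ae h2
        _ = 0 := by simp
    -- second moment of increment
    have hd2_int : Integrable (fun ω => (d ω) ^ 2) μ := by
      refine hbdd_int _ 1 (((hmeas (t + 1)).sub (hmeas t)).pow 2).aestronglyMeasurable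
        fun ω => ?_
      rw [abs_pow]
      calc |d ω| ^ 2 ≤ 1 ^ 2 := pow_le_pow_left₀ (abs_nonneg _) (hd_bd ω) 2
        _ = 1 := one_pow 2
    have hWW_int : Integrable (fun ω => W t ω - (W t ω) ^ 2) μ :=
      (hmart.integrable t).sub (hsq t)
    have hd2 : ∫ ω, (d ω) ^ 2 ∂μ = z (t + 1) * (ω0 - ∫ ω, (W t ω) ^ 2 ∂μ) := by
      calc ∫ ω, (d ω) ^ 2 ∂μ
          = ∫ ω, (μ[fun ω => (W (t + 1) ω - W t ω) ^ 2 | ℱ t]) ω ∂μ :=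
            (integral_condExp (ℱ.le t)).symm
        _ = ∫ ω, W t ω * (1 - W t ω) * z (t + 1) ∂μ := integral_congr_ae (hcondvar t)
        _ = ∫ ω, (W t ω - (W t ω) ^ 2) * z (t + 1) ∂μ := by
            congr 1; funext ω; ring
        _ = (∫ ω, (W t ω - (W t ω) ^ 2) ∂μ) * z (t + 1) := integral_mul_const _ _
        _ = ((∫ ω, W t ω ∂μ) - ∫ ω, (W t ω) ^ 2 ∂μ) * z (t + 1) := by
            rw [integral_sub (hmart.integrable t) (hsq t)]
        _ = z (t + 1) * (ω0 - ∫ ω, (W t ω) ^ 2 ∂μ) := by rw [hint t]; ring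
    -- expand square
    have hexp : ∀ ω, (W (t + 1) ω) ^ 2
        = (W t ω) ^ 2 + (2 * (W t ω * d ω) + (d ω) ^ 2) := by
      intro ω; simp only [hd_def]; ring
    calc ∫ ω, (W (t + 1) ω) ^ 2 ∂μ
        = ∫ ω, ((W t ω) ^ 2 + (2 * (W t ω * d ω) + (d ω) ^ 2)) ∂μ := by
          congr 1; funext ω; exact hexp ω
      _ = (∫ ω, (W t ω) ^ 2 ∂μ) + ∫ ω, (2 * (W t ω * d ω) + (d ω) ^ 2) ∂μ := by
          exact integral_add (hsq t) (((hWd_int'.const_mul 2)).add hd2_int)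
      _ = (∫ ω, (W t ω) ^ 2 ∂μ) + ((2 * ∫ ω, W t ω * d ω ∂μ) + ∫ ω, (d ω) ^ 2 ∂μ) := by
          rw [integral_add ((hWd_int'.const_mul 2)) hd2_int, integral_const_mul]
      _ = ∫ ω, (W t ω) ^ 2 ∂μ + z (t + 1) * (ω0 - ∫ ω, (W t ω) ^ 2 ∂μ) := by
          rw [horth, hd2]; ring
  -- initial second moment
  have h0 : ∫ ω, (W 0 ω) ^ 2 ∂μ = ω0 ^ 2 := by simp [hinit]
  -- main induction on second moments
  have main : ∀ t : ℕ, 1 ≤ t →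
      (∫ ω, (W t ω) ^ 2 ∂μ) - ω0 ^ 2 = a t * (ω0 * (1 - ω0)) := by
    intro t ht
    induction t with
    | zero => omega
    | succ n ih =>
      rcases Nat.eq_or_lt_of_le ht with h | h
      · -- n = 0
        have hn : n = 0 := by omega
        subst hn
        rw [step 0, h0, ha1]; ring
      · have hn : 1 ≤ n := by omega
        have := ih hn
        rw [step n, ha n hn]
        linear_combination (1 - z (n + 1)) * this
  intro t ht
  rw [hint t]
  exact main t ht
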